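/- arXiv:2403.01920 — 2 statements merged into one kernel-verified Lean document; each statement's English description precedes it below -/
import Mathlib

section
/- Let x_λ denote the unique minimizer of x ↦ λ‖Ax − b‖²_{M⁻¹} + ‖x‖²_{N⁻¹} for λ ≥ 0. Then the function H(λ) := ½(‖A x_λ − b‖²_{M⁻¹} − τm) is strictly monotonically decreasing on the set of λ ≥ 0 for which x_{λ₁} ≠ x_{λ₂} whenever λ₁ ≠ λ₂; in particular, if λ₁ ≠ λ₂ and x_{λ₁} ≠ x_{λ₂}, then (λ₁ − λ₂)(H(λ₁) − H(λ₂)) < 0. -/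
open Matrix

private lemma dot_symm {k : ℕ} (S : Matrix (Fin k) (Fin k) ℝ) (hS : Sᵀ = S)
    (u v : Fin k → ℝ) : u ⬝ᵥ (S *ᵥ v) = v ⬝ᵥ (S *ᵥ u) := by
  rw [dotProduct_mulVec, ← hS, vecMul_transpose, dotProduct_comm, hS]

/-- With x_λ the unique solution of (N⁻¹ + λAᵀM⁻¹A)x = λAᵀM⁻¹b and
H(λ) = ½(‖A x_λ − b‖²_{M⁻¹} − τm), if λ₁ ≠ λ₂ and x_{λ₁} ≠ x_{λ₂} then
(λ₁ − λ₂)(H(λ₁) − H(λ₂)) < 0. -/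
theorem stmt_2 {m n : ℕ} (A : Matrix (Fin m) (Fin n) ℝ) (b : Fin m → ℝ)
    (M : Matrix (Fin m) (Fin m) ℝ) (N : Matrix (Fin n) (Fin n) ℝ)
    (hM : M.PosDef) (hN : N.PosDef) (τm : ℝ) (hτm : 0 < τm)
    (xl : ℝ → (Fin n → ℝ))
    (hxl : ∀ lam : ℝ, 0 ≤ lam →
      (N⁻¹ + lam • (Aᵀ * M⁻¹ * A)) *ᵥ xl lam = lam • (Aᵀ *ᵥ (M⁻¹ *ᵥ b)))
    (H : ℝ → ℝ)
    (hH : ∀ lam : ℝ, H lam =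
      (1 / 2) * ((A *ᵥ xl lam - b) ⬝ᵥ (M⁻¹ *ᵥ (A *ᵥ xl lam - b)) - τm)) :
    ∀ lam1 lam2 : ℝ, 0 ≤ lam1 → 0 ≤ lam2 → lam1 ≠ lam2 → xl lam1 ≠ xl lam2 →
      (lam1 - lam2) * (H lam1 - H lam2) < 0 := by
  set Q := M⁻¹ with hQdef
  set P := N⁻¹ with hPdef
  have hQ : Q.PosDef := hM.inv
  have hP : P.PosDef := hN.inv
  have hQs : Qᵀ = Q := hQ.isHermitian.eq
  have hPs : Pᵀ = P := hP.isHermitian.eq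
  set g : (Fin n → ℝ) → ℝ := fun x => (A *ᵥ x - b) ⬝ᵥ (Q *ᵥ (A *ᵥ x - b)) with hg
  set h : (Fin n → ℝ) → ℝ := fun x => x ⬝ᵥ (P *ᵥ x) with hh
  -- key strict minimization property
  have key : ∀ lam : ℝ, 0 ≤ lam → ∀ y : Fin n → ℝ, y ≠ xl lam →
      lam * g (xl lam) + h (xl lam) < lam * g y + h y := by
    intro lam hlam y hy
    set x := xl lam with hx
    set d := y - x with hd
    have hdne : d ≠ 0 := sub_ne_zero.mpr hy
    have hyd : y = x + d := by rw [hd]; ring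
    -- the stationarity condition
    have hstat : P *ᵥ x + lam • (Aᵀ *ᵥ (Q *ᵥ (A *ᵥ x - b))) = 0 := by
      have h1 := hxl lam hlam
      have : (P + lam • (Aᵀ * Q * A)) *ᵥ x = P *ᵥ x + lam • (Aᵀ *ᵥ (Q *ᵥ (A *ᵥ x))) := by
        rw [add_mulVec, smul_mulVec, mulVec_mulVec, mulVec_mulVec]
      rw [this] at h1
      have hsub : Q *ᵥ (A *ᵥ x - b) = Q *ᵥ (A *ᵥ x) - Q *ᵥ b := by
        rw [mulVec_sub]
      rw [hsub, mulVec_sub, smul_sub]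
      rw [← h1]
      abel
    -- cross term vanishes
    have hcross : lam * ((A *ᵥ d) ⬝ᵥ (Q *ᵥ (A *ᵥ x - b))) + d ⬝ᵥ (P *ᵥ x) = 0 := by
      have h1 : (A *ᵥ d) ⬝ᵥ (Q *ᵥ (A *ᵥ x - b)) = d ⬝ᵥ (Aᵀ *ᵥ (Q *ᵥ (A *ᵥ x - b))) := by
        rw [dotProduct_mulVec d, vecMul_transpose]
      have h2 : lam * ((A *ᵥ d) ⬝ᵥ (Q *ᵥ (A *ᵥ x - b))) + d ⬝ᵥ (P *ᵥ x)
          = d ⬝ᵥ (P *ᵥ x + lam • (Aᵀ *ᵥ (Q *ᵥ (A *ᵥ x - b)))) := by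
        rw [dotProduct_add, dotProduct_smul, h1, smul_eq_mul]; ring
      rw [h2, hstat, dotProduct_zero]
    -- expansion of g y
    have hAy : A *ᵥ y - b = (A *ᵥ x - b) + A *ᵥ d := by
      rw [hyd, mulVec_add]; abel
    have hgy : g y = g x + 2 * ((A *ᵥ d) ⬝ᵥ (Q *ᵥ (A *ᵥ x - b)))
        + (A *ᵥ d) ⬝ᵥ (Q *ᵥ (A *ᵥ d)) := by
      have hsy : (A *ᵥ x - b) ⬝ᵥ (Q *ᵥ (A *ᵥ d)) = (A *ᵥ d) ⬝ᵥ (Q *ᵥ (A *ᵥ x - b)) :=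
        dot_symm Q hQs _ _
      simp only [hg, hAy, mulVec_add, dotProduct_add, add_dotProduct, hsy]
      ring
    have hhy : h y = h x + 2 * (d ⬝ᵥ (P *ᵥ x)) + d ⬝ᵥ (P *ᵥ d) := by
      have hsy : x ⬝ᵥ (P *ᵥ d) = d ⬝ᵥ (P *ᵥ x) := dot_symm P hPs _ _
      simp only [hh, hyd, mulVec_add, dotProduct_add, add_dotProduct, hsy]
      ring
    have hpos1 : 0 < d ⬝ᵥ (P *ᵥ d) := by simpa using hP.dotProduct_mulVec_pos hdne
    have hpos2 : 0 ≤ (A *ᵥ d) ⬝ᵥ (Q *ᵥ (A *ᵥ d)) := by simpa using hQ.posSemidef.dotProduct_mulVec_nonneg (A *ᵥ d)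
    nlinarith [mul_nonneg hlam hpos2]
  -- main argument
  intro lam1 lam2 h1 h2 hne hxne
  have k1 := key lam1 h1 (xl lam2) (fun he => hxne he.symm)
  have k2 := key lam2 h2 (xl lam1) hxne
  rw [hH lam1, hH lam2]
  have e1 : (A *ᵥ xl lam1 - b) ⬝ᵥ (M⁻¹ *ᵥ (A *ᵥ xl lam1 - b)) = g (xl lam1) := rfl
  have e2 : (A *ᵥ xl lam2 - b) ⬝ᵥ (M⁻¹ *ᵥ (A *ᵥ xl lam2 - b)) = g (xl lam2) := rfl
  rw [e1, e2]
  nlinarith [k1, k2]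
end

section
/- Define F(x, λ) = (λAᵀM⁻¹(Ax−b) + N⁻¹x, ½‖Ax−b‖²_{M⁻¹} − τm/2) ∈ ℝ^n × ℝ. Under the standing assumption, the equation F(x, λ) = 0 has a unique solution (x*, λ*) in ℝ^n × [0, ∞). -/
open Matrix

namespace Stmt5Helpers

lemma transpose_eq {k : ℕ} {P : Matrix (Fin k) (Fin k) ℝ} (hP : P.IsHermitian) : Pᵀ = P := by
  ext i j
  simpa using congrFun (congrFun hP i) j

lemma dot_symm {k : ℕ} {P : Matrix (Fin k) (Fin k) ℝ} (hPt : Pᵀ = P) (u w : Fin k → ℝ) :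
    u ⬝ᵥ P *ᵥ w = w ⬝ᵥ P *ᵥ u := by
  rw [dotProduct_mulVec, ← mulVec_transpose, hPt, dotProduct_comm]

lemma dot_trans {l k : ℕ} (A : Matrix (Fin l) (Fin k) ℝ) (d : Fin k → ℝ) (z : Fin l → ℝ) :
    (A *ᵥ d) ⬝ᵥ z = d ⬝ᵥ (Aᵀ *ᵥ z) := by
  rw [dotProduct_comm, dotProduct_mulVec, dotProduct_comm, mulVec_transpose]

lemma expand_quad {k : ℕ} {P : Matrix (Fin k) (Fin k) ℝ} (hPt : Pᵀ = P) (r s : Fin k → ℝ) :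
    (r + s) ⬝ᵥ P *ᵥ (r + s) = r ⬝ᵥ P *ᵥ r + 2 * (s ⬝ᵥ P *ᵥ r) + s ⬝ᵥ P *ᵥ s := by
  have h := dot_symm hPt r s
  simp only [mulVec_add, add_dotProduct, dotProduct_add]
  linarith

lemma g_exp {m n : ℕ} (A : Matrix (Fin m) (Fin n) ℝ) (b : Fin m → ℝ)
    {P : Matrix (Fin m) (Fin m) ℝ} (hPt : Pᵀ = P) (x z : Fin n → ℝ) :
    (A *ᵥ z - b) ⬝ᵥ P *ᵥ (A *ᵥ z - b) =
      (A *ᵥ x - b) ⬝ᵥ P *ᵥ (A *ᵥ x - b)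
      + 2 * ((z - x) ⬝ᵥ (Aᵀ *ᵥ (P *ᵥ (A *ᵥ x - b))))
      + (A *ᵥ (z - x)) ⬝ᵥ P *ᵥ (A *ᵥ (z - x)) := by
  have h1 : A *ᵥ z - b = (A *ᵥ x - b) + A *ᵥ (z - x) := by
    rw [mulVec_sub]; abel
  rw [h1, expand_quad hPt, dot_trans]

lemma q_exp {n : ℕ} {Q : Matrix (Fin n) (Fin n) ℝ} (hQt : Qᵀ = Q) (x z : Fin n → ℝ) :
    z ⬝ᵥ Q *ᵥ z = x ⬝ᵥ Q *ᵥ x + 2 * ((z - x) ⬝ᵥ (Q *ᵥ x)) + (z - x) ⬝ᵥ Q *ᵥ (z - x) := by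
  have h1 : z = x + (z - x) := by abel
  conv_lhs => rw [h1]
  rw [expand_quad hQt]

lemma cont_dot {k : ℕ} {X : Type*} [TopologicalSpace X] {f g : X → Fin k → ℝ}
    (hf : Continuous f) (hg : Continuous g) : Continuous fun x => f x ⬝ᵥ g x := by
  simp only [dotProduct]
  exact continuous_finset_sum _ fun i _ =>
    (((continuous_apply i).comp hf).mul ((continuous_apply i).comp hg))

lemma cont_mulVec {l k : ℕ} (A : Matrix (Fin l) (Fin k) ℝ) : Continuous fun x => A *ᵥ x :=
  A.mulVecLin.continuous_of_finiteDimensional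

lemma coercive {k : ℕ} {Q : Matrix (Fin k) (Fin k) ℝ} (hQ : Q.PosDef) :
    ∃ c > 0, ∀ x : Fin k → ℝ, c * ‖x‖ ^ 2 ≤ x ⬝ᵥ Q *ᵥ x := by
  rcases Nat.eq_zero_or_pos k with hk | hk
  · refine ⟨1, one_pos, fun x => ?_⟩
    subst hk
    have h0 : ‖x‖ = 0 := by rw [Subsingleton.elim x 0]; simp
    have h1 : x ⬝ᵥ Q *ᵥ x = 0 := by rw [Subsingleton.elim x 0]; simp
    simp [h0, h1]
  · have hnt : Nontrivial (Fin k → ℝ) := by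
      refine ⟨Pi.single ⟨0, hk⟩ 1, 0, ?_⟩
      intro h
      have := congrFun h ⟨0, hk⟩
      simp at this
    have hsph : (Metric.sphere (0 : Fin k → ℝ) 1).Nonempty :=
      NormedSpace.sphere_nonempty.mpr zero_le_one
    have hcont : Continuous fun x : Fin k → ℝ => x ⬝ᵥ Q *ᵥ x :=
      cont_dot continuous_id (cont_mulVec Q)
    obtain ⟨u, humem, hmin⟩ :=
      (isCompact_sphere (0 : Fin k → ℝ) 1).exists_isMinOn hsph hcont.continuousOn
    have hu1 : ‖u‖ = 1 := by simpa using humem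
    have hune : u ≠ 0 := by intro h; rw [h] at hu1; simp at hu1
    have hc : 0 < u ⬝ᵥ Q *ᵥ u := by simpa using hQ.dotProduct_mulVec_pos hune
    refine ⟨u ⬝ᵥ Q *ᵥ u, hc, fun x => ?_⟩
    rcases eq_or_ne x 0 with rfl | hx
    · simp
    · have hnx : (0:ℝ) < ‖x‖ := norm_pos_iff.mpr hx
      set w := ‖x‖⁻¹ • x with hw
      have hwn : ‖w‖ = 1 := by
        rw [hw, norm_smul]
        simp [abs_of_pos hnx, inv_mul_cancel₀ hnx.ne']
      have hle : u ⬝ᵥ Q *ᵥ u ≤ w ⬝ᵥ Q *ᵥ w := hmin (by simpa using hwn)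
      have hxw : x = ‖x‖ • w := by
        rw [hw, smul_smul, mul_inv_cancel₀ hnx.ne', one_smul]
      have hexp : (‖x‖ • w) ⬝ᵥ Q *ᵥ (‖x‖ • w) = ‖x‖ ^ 2 * (w ⬝ᵥ Q *ᵥ w) := by
        rw [smul_dotProduct, mulVec_smul, dotProduct_smul]
        simp [smul_eq_mul]; ring
      have h2 : x ⬝ᵥ Q *ᵥ x = ‖x‖ ^ 2 * (w ⬝ᵥ Q *ᵥ w) := by
        conv_lhs => rw [hxw]
        exact hexp
      rw [h2]
      have := mul_le_mul_of_nonneg_left hle (le_of_lt (pow_pos hnx 2))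
      nlinarith

lemma exists_min {k : ℕ} {S : Set (Fin k → ℝ)} (hS : IsClosed S) {x0 : Fin k → ℝ}
    (hx0 : x0 ∈ S) (f : (Fin k → ℝ) → ℝ) (hf : Continuous f) (R : ℝ)
    (hR : ∀ y ∈ S, R < ‖y‖ → f x0 ≤ f y) :
    ∃ x ∈ S, ∀ y ∈ S, f x ≤ f y := by
  set K := S ∩ Metric.closedBall 0 (max R ‖x0‖) with hK
  have hKc : IsCompact K := (isCompact_closedBall 0 _).inter_left hS
  have hx0K : x0 ∈ K := ⟨hx0, by simp [Metric.mem_closedBall, dist_zero_right]⟩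
  obtain ⟨x, hxK, hmin⟩ := hKc.exists_isMinOn ⟨x0, hx0K⟩ hf.continuousOn
  refine ⟨x, hxK.1, fun y hy => ?_⟩
  by_cases hyb : ‖y‖ ≤ max R ‖x0‖
  · exact hmin ⟨hy, by simpa [Metric.mem_closedBall, dist_zero_right] using hyb⟩
  · push_neg at hyb
    have h1 : R < ‖y‖ := lt_of_le_of_lt (le_max_left _ _) hyb
    exact le_trans (hmin hx0K) (hR y hy h1)

end Stmt5Helpers

open Stmt5Helpers

set_option maxHeartbeats 1000000 in
/-- The gradient equation F(x, λ) = 0 has a unique solution (x*, λ*) in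
ℝⁿ × [0, ∞). -/
theorem stmt_5 {m n : ℕ} (A : Matrix (Fin m) (Fin n) ℝ) (b : Fin m → ℝ)
    (M : Matrix (Fin m) (Fin m) ℝ) (N : Matrix (Fin n) (Fin n) ℝ)
    (hM : M.PosDef) (hN : N.PosDef) (τm : ℝ) (hτm : 0 < τm)
    (hassump : ∀ x : Fin n → ℝ,
      (∀ z : Fin n → ℝ, (A *ᵥ x - b) ⬝ᵥ (M⁻¹ *ᵥ (A *ᵥ x - b)) ≤
          (A *ᵥ z - b) ⬝ᵥ (M⁻¹ *ᵥ (A *ᵥ z - b))) →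
        (A *ᵥ x - b) ⬝ᵥ (M⁻¹ *ᵥ (A *ᵥ x - b)) < τm ∧ τm < b ⬝ᵥ (M⁻¹ *ᵥ b)) :
    ∃! p : (Fin n → ℝ) × ℝ, 0 ≤ p.2 ∧
      p.2 • (Aᵀ *ᵥ (M⁻¹ *ᵥ (A *ᵥ p.1 - b))) + N⁻¹ *ᵥ p.1 = 0 ∧
      (1 / 2) * ((A *ᵥ p.1 - b) ⬝ᵥ (M⁻¹ *ᵥ (A *ᵥ p.1 - b))) - τm / 2 = 0 := by
  classical
  have hP : (M⁻¹).PosDef := hM.inv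
  have hQ : (N⁻¹).PosDef := hN.inv
  have hPt : (M⁻¹)ᵀ = M⁻¹ := transpose_eq hP.1
  have hQt : (N⁻¹)ᵀ = N⁻¹ := transpose_eq hQ.1
  have hPsd : ∀ u : Fin m → ℝ, 0 ≤ u ⬝ᵥ (M⁻¹ *ᵥ u) := fun u => by
    simpa using hP.posSemidef.dotProduct_mulVec_nonneg u
  have hQsd : ∀ u : Fin n → ℝ, 0 ≤ u ⬝ᵥ (N⁻¹ *ᵥ u) := fun u => by
    simpa using hQ.posSemidef.dotProduct_mulVec_nonneg u
  have hQpos : ∀ u : Fin n → ℝ, u ≠ 0 → 0 < u ⬝ᵥ (N⁻¹ *ᵥ u) := fun u hu => by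
    simpa using hQ.dotProduct_mulVec_pos hu
  set g : (Fin n → ℝ) → ℝ := fun x => (A *ᵥ x - b) ⬝ᵥ (M⁻¹ *ᵥ (A *ᵥ x - b)) with hgdef
  set q : (Fin n → ℝ) → ℝ := fun x => x ⬝ᵥ (N⁻¹ *ᵥ x) with hqdef
  set v : (Fin n → ℝ) → (Fin n → ℝ) := fun x => Aᵀ *ᵥ (M⁻¹ *ᵥ (A *ᵥ x - b)) with hvdef
  have hg_cont : Continuous g :=
    cont_dot ((cont_mulVec A).sub continuous_const)
      ((cont_mulVec M⁻¹).comp ((cont_mulVec A).sub continuous_const))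
  have hq_cont : Continuous q := cont_dot continuous_id (cont_mulVec N⁻¹)
  have hgexp : ∀ x z : Fin n → ℝ, g z = g x + 2 * ((z - x) ⬝ᵥ v x)
      + (A *ᵥ (z - x)) ⬝ᵥ (M⁻¹ *ᵥ (A *ᵥ (z - x))) := fun x z => g_exp A b hPt x z
  have hqexp : ∀ x z : Fin n → ℝ, q z = q x + 2 * ((z - x) ⬝ᵥ (N⁻¹ *ᵥ x))
      + (z - x) ⬝ᵥ (N⁻¹ *ᵥ (z - x)) := fun x z => q_exp hQt x z
  -- stationarity implies strict feasibility
  have hstat : ∀ x : Fin n → ℝ, v x = 0 → g x < τm := by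
    intro x hvx
    refine (hassump x ?_).1
    intro z
    have h1 := hgexp x z
    rw [hvx] at h1
    have h2 := hPsd (A *ᵥ (z - x))
    simp only [dotProduct_zero] at h1
    show g x ≤ g z
    linarith
  obtain ⟨cP, hcP, hcoP⟩ := coercive hP
  obtain ⟨cQ, hcQ, hcoQ⟩ := coercive hQ
  -- Step A: least squares minimizer
  have hlsq : ∃ xhat : Fin n → ℝ, ∀ z, g xhat ≤ g z := by
    set W : Set (Fin m → ℝ) := (LinearMap.range (Matrix.mulVecLin A) : Set (Fin m → ℝ))
      with hWdef
    have hWclosed : IsClosed W := Submodule.closed_of_finiteDimensional _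
    have h0W : (0 : Fin m → ℝ) ∈ W := (LinearMap.range (Matrix.mulVecLin A)).zero_mem
    set h : (Fin m → ℝ) → ℝ := fun y => (y - b) ⬝ᵥ (M⁻¹ *ᵥ (y - b)) with hhdef
    have hh_cont : Continuous h :=
      cont_dot (continuous_id.sub continuous_const)
        ((cont_mulVec M⁻¹).comp (continuous_id.sub continuous_const))
    have hh0 : 0 ≤ h 0 := hPsd _
    have hbound : ∀ y ∈ W, ‖b‖ + Real.sqrt (h 0 / cP) + 1 < ‖y‖ → h 0 ≤ h y := by
      intro y _ hy
      have h1 : cP * ‖y - b‖ ^ 2 ≤ h y := hcoP (y - b)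
      have h2 : ‖y‖ - ‖b‖ ≤ ‖y - b‖ := norm_sub_norm_le y b
      have hnn : 0 ≤ h 0 / cP := div_nonneg hh0 hcP.le
      have hs : Real.sqrt (h 0 / cP) ^ 2 = h 0 / cP := Real.sq_sqrt hnn
      have hsn : 0 ≤ Real.sqrt (h 0 / cP) := Real.sqrt_nonneg _
      have hkey : h 0 / cP < ‖y - b‖ ^ 2 := by nlinarith
      have : h 0 < cP * ‖y - b‖ ^ 2 := by
        rw [div_lt_iff₀ hcP] at hkey
        linarith [hkey]
      linarith
    obtain ⟨yhat, hyW, hymin⟩ := exists_min hWclosed h0W h hh_cont _ hbound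
    obtain ⟨xhat, hxhat⟩ := hyW
    refine ⟨xhat, fun z => ?_⟩
    have hz : A *ᵥ z ∈ W := ⟨z, rfl⟩
    have := hymin (A *ᵥ z) hz
    have he : h yhat = g xhat := by
      rw [← hxhat]
      rfl
    rw [he] at this
    exact this
  obtain ⟨xhat, hxhatmin⟩ := hlsq
  have hkey := hassump xhat hxhatmin
  have hght : g xhat < τm := hkey.1
  have hbPb : τm < b ⬝ᵥ (M⁻¹ *ᵥ b) := hkey.2
  -- Step B: minimize q on the feasible set C
  set C : Set (Fin n → ℝ) := {x | g x ≤ τm} with hCdef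
  have hCclosed : IsClosed C := isClosed_le hg_cont continuous_const
  have hxhatC : xhat ∈ C := le_of_lt hght
  have hqb : ∀ y ∈ C, Real.sqrt (q xhat / cQ) + 1 < ‖y‖ → q xhat ≤ q y := by
    intro y _ hy
    have h1 : cQ * ‖y‖ ^ 2 ≤ q y := hcoQ y
    have hnn : 0 ≤ q xhat / cQ := div_nonneg (hQsd _) hcQ.le
    have hs : Real.sqrt (q xhat / cQ) ^ 2 = q xhat / cQ := Real.sq_sqrt hnn
    have hsn : 0 ≤ Real.sqrt (q xhat / cQ) := Real.sqrt_nonneg _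
    have hkey2 : q xhat / cQ < ‖y‖ ^ 2 := by nlinarith
    have : q xhat < cQ * ‖y‖ ^ 2 := by
      rw [div_lt_iff₀ hcQ] at hkey2
      linarith
    linarith
  obtain ⟨xs, hxsC, hxsmin⟩ := exists_min hCclosed hxhatC q hq_cont _ hqb
  -- Step C: the constraint is active at xs
  have hgeq : g xs = τm := by
    by_contra hne
    have hlt : g xs < τm := lt_of_le_of_ne hxsC hne
    rcases eq_or_ne xs 0 with rfl | hxs0
    · have hg0 : g 0 = b ⬝ᵥ (M⁻¹ *ᵥ b) := by
        simp [hgdef, mulVec_zero, zero_sub, neg_dotProduct, mulVec_neg, dotProduct_neg]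
      rw [hg0] at hlt
      linarith
    · have hq0 : 0 < q xs := hQpos xs hxs0
      have hcont2 : ContinuousAt (fun t : ℝ => g ((1 - t) • xs)) 0 :=
        (hg_cont.comp ((continuous_const.sub continuous_id).smul continuous_const)).continuousAt
      have hval : (fun t : ℝ => g ((1 - t) • xs)) 0 < τm := by simpa using hlt
      have hev : ∀ᶠ t : ℝ in nhds 0, g ((1 - t) • xs) < τm :=
        hcont2.eventually_lt continuousAt_const hval
      rw [Metric.eventually_nhds_iff] at hev
      obtain ⟨ε, hε, hball⟩ := hev
      set t0 : ℝ := min (ε / 2) (1 / 2) with ht0def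
      have ht0pos : 0 < t0 := lt_min (by linarith) (by norm_num)
      have ht0lt1 : t0 < 1 := lt_of_le_of_lt (min_le_right _ _) (by norm_num)
      have ht0ε : dist t0 0 < ε := by
        rw [Real.dist_eq, sub_zero, abs_of_pos ht0pos]
        exact lt_of_le_of_lt (min_le_left _ _) (by linarith)
      have hmemC : (1 - t0) • xs ∈ C := le_of_lt (hball ht0ε)
      have hqval : q ((1 - t0) • xs) = (1 - t0) ^ 2 * q xs := by
        rw [hqdef]
        simp only [smul_dotProduct, mulVec_smul, dotProduct_smul, smul_eq_mul]
        ring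
      have ht02 : (0:ℝ) < 2 - t0 := by linarith
      have hlt2 : q ((1 - t0) • xs) < q xs := by
        rw [hqval]
        nlinarith [mul_pos hq0 (mul_pos ht0pos ht02)]
      exact absurd (hxsmin _ hmemC) (not_le.mpr hlt2)
  have hvne : v xs ≠ 0 := fun h => lt_irrefl τm (hgeq ▸ hstat xs h)
  -- Step E: Lagrange multiplier exists
  have hlam : ∃ lam : ℝ, 0 ≤ lam ∧ lam • v xs + N⁻¹ *ᵥ xs = 0 := by
    by_contra hno
    push_neg at hno
    have hcne : N⁻¹ *ᵥ xs ≠ 0 := by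
      intro h
      exact hno 0 le_rfl (by simp [h])
    have hvvnn : 0 ≤ v xs ⬝ᵥ v xs := by
      simp only [dotProduct]
      exact Finset.sum_nonneg fun i _ => mul_self_nonneg _
    have hvvpos : 0 < v xs ⬝ᵥ v xs := by
      rcases hvvnn.eq_or_lt with h | h
      · exact absurd (dotProduct_self_eq_zero.mp h.symm) hvne
      · exact h
    obtain ⟨d, hdv, hdc⟩ : ∃ d : Fin n → ℝ, d ⬝ᵥ v xs < 0 ∧ d ⬝ᵥ (N⁻¹ *ᵥ xs) < 0 := by
      set vv := v xs with hvv
      set cc := N⁻¹ *ᵥ xs with hcc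
      set μ : ℝ := (vv ⬝ᵥ cc) / (vv ⬝ᵥ vv) with hμ
      set w : Fin n → ℝ := cc - μ • vv with hw
      have hvw : vv ⬝ᵥ w = 0 := by
        rw [hw, dotProduct_sub, dotProduct_smul, smul_eq_mul, hμ]
        field_simp
        ring
      have hwv : w ⬝ᵥ vv = 0 := by rw [dotProduct_comm]; exact hvw
      rcases eq_or_ne w 0 with hw0 | hw0
      · have hccv : cc = μ • vv := by rwa [hw, sub_eq_zero] at hw0
        have hμne : μ ≠ 0 := by
          rintro h
          rw [h, zero_smul] at hccv
          exact hcne hccv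
        rcases hμne.lt_or_gt with hμneg | hμpos
        · exfalso
          refine hno (-μ) (by linarith) ?_
          rw [hccv, ← add_smul]
          simp
        · refine ⟨-vv, ?_, ?_⟩
          · rw [neg_dotProduct]
            linarith
          · rw [hccv, dotProduct_smul, neg_dotProduct, smul_eq_mul]
            nlinarith
      · have hwwpos : 0 < w ⬝ᵥ w := by
          have hnn : 0 ≤ w ⬝ᵥ w := by
            simp only [dotProduct]
            exact Finset.sum_nonneg fun i _ => mul_self_nonneg _
          rcases hnn.eq_or_lt with h | h
          · exact absurd (dotProduct_self_eq_zero.mp h.symm) hw0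
          · exact h
        set s : ℝ := (μ * (vv ⬝ᵥ vv) - 1) / (w ⬝ᵥ w) with hs
        have hcc2 : cc = μ • vv + w := by rw [hw]; abel
        refine ⟨-vv + s • w, ?_, ?_⟩
        · rw [add_dotProduct, neg_dotProduct, smul_dotProduct, smul_eq_mul, hwv]
          simpa using hvvpos
        · rw [hcc2, dotProduct_add, add_dotProduct, add_dotProduct, neg_dotProduct,
            neg_dotProduct, smul_dotProduct, smul_dotProduct, dotProduct_smul,
            dotProduct_smul, smul_eq_mul, smul_eq_mul, smul_eq_mul, hwv, hvw]
          have hsww : s * (w ⬝ᵥ w) = μ * (vv ⬝ᵥ vv) - 1 := by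
            rw [hs]; field_simp
          simp only [smul_eq_mul, mul_zero, neg_zero, zero_add, add_zero]
          linarith [hsww]
    -- quadratic decrease step
    set e : ℝ := (A *ᵥ d) ⬝ᵥ (M⁻¹ *ᵥ (A *ᵥ d)) with hedef
    set f' : ℝ := d ⬝ᵥ (N⁻¹ *ᵥ d) with hfdef
    have he : 0 ≤ e := hPsd _
    have hf' : 0 ≤ f' := hQsd _
    set t : ℝ := min ((-(d ⬝ᵥ v xs)) / (e + 1)) ((-(d ⬝ᵥ (N⁻¹ *ᵥ xs))) / (f' + 1)) with htdef
    have ht : 0 < t :=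
      lt_min (div_pos (by linarith) (by linarith)) (div_pos (by linarith) (by linarith))
    have ht1 : t * (e + 1) ≤ -(d ⬝ᵥ v xs) := by
      have := min_le_left ((-(d ⬝ᵥ v xs)) / (e + 1)) ((-(d ⬝ᵥ (N⁻¹ *ᵥ xs))) / (f' + 1))
      calc t * (e + 1) ≤ ((-(d ⬝ᵥ v xs)) / (e + 1)) * (e + 1) := by
            apply mul_le_mul_of_nonneg_right this (by linarith)
        _ = -(d ⬝ᵥ v xs) := by field_simp
    have ht2 : t * (f' + 1) ≤ -(d ⬝ᵥ (N⁻¹ *ᵥ xs)) := by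
      have := min_le_right ((-(d ⬝ᵥ v xs)) / (e + 1)) ((-(d ⬝ᵥ (N⁻¹ *ᵥ xs))) / (f' + 1))
      calc t * (f' + 1) ≤ ((-(d ⬝ᵥ (N⁻¹ *ᵥ xs))) / (f' + 1)) * (f' + 1) := by
            apply mul_le_mul_of_nonneg_right this (by linarith)
        _ = -(d ⬝ᵥ (N⁻¹ *ᵥ xs)) := by field_simp
    have hdiff : xs + t • d - xs = t • d := by abel
    have hgstep : g (xs + t • d) = g xs + 2 * (t * (d ⬝ᵥ v xs)) + t ^ 2 * e := by
      have h1 := hgexp xs (xs + t • d)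
      rw [hdiff] at h1
      rw [h1, smul_dotProduct, smul_eq_mul, mulVec_smul, smul_dotProduct, mulVec_smul,
        dotProduct_smul, smul_eq_mul, smul_eq_mul]
      ring
    have hqstep : q (xs + t • d) = q xs + 2 * (t * (d ⬝ᵥ (N⁻¹ *ᵥ xs))) + t ^ 2 * f' := by
      have h1 := hqexp xs (xs + t • d)
      rw [hdiff] at h1
      rw [h1, smul_dotProduct, smul_eq_mul, mulVec_smul, smul_dotProduct,
        dotProduct_smul, smul_eq_mul, smul_eq_mul]
      ring
    have hmem : xs + t • d ∈ C := by
      show g (xs + t • d) ≤ τm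
      rw [hgstep, hgeq]
      nlinarith [ht1, ht, hdv, he]
    have hqdec : q (xs + t • d) < q xs := by
      rw [hqstep]
      nlinarith [ht2, ht, hdc, hf']
    exact absurd (hxsmin _ hmem) (not_le.mpr hqdec)
  obtain ⟨lam, hlam0, hlameq⟩ := hlam
  -- the convexity inequality used for uniqueness
  have hJ : ∀ (x : Fin n → ℝ) (l : ℝ), 0 ≤ l → l • v x + N⁻¹ *ᵥ x = 0 →
      ∀ z, l * g x + q x + ((z - x) ⬝ᵥ (N⁻¹ *ᵥ (z - x))) ≤ l * g z + q z := by
    intro x l hl heq z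
    have h1 := hgexp x z
    have h2 := hqexp x z
    have h3 : (z - x) ⬝ᵥ (l • v x + N⁻¹ *ᵥ x) = 0 := by rw [heq]; simp
    rw [dotProduct_add, dotProduct_smul, smul_eq_mul] at h3
    have h4 : 0 ≤ (A *ᵥ (z - x)) ⬝ᵥ (M⁻¹ *ᵥ (A *ᵥ (z - x))) := hPsd _
    have h5 : 0 ≤ l * ((A *ᵥ (z - x)) ⬝ᵥ (M⁻¹ *ᵥ (A *ᵥ (z - x)))) := mul_nonneg hl h4
    have h1l : l * g z = l * g x + 2 * (l * ((z - x) ⬝ᵥ v x))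
        + l * ((A *ᵥ (z - x)) ⬝ᵥ (M⁻¹ *ᵥ (A *ᵥ (z - x)))) := by rw [h1]; ring
    linarith
  -- assemble
  have hsecond : (1 / 2) * ((A *ᵥ xs - b) ⬝ᵥ (M⁻¹ *ᵥ (A *ᵥ xs - b))) - τm / 2 = 0 := by
    have hh : (A *ᵥ xs - b) ⬝ᵥ (M⁻¹ *ᵥ (A *ᵥ xs - b)) = g xs := rfl
    rw [hh, hgeq]; ring
  refine ⟨⟨xs, lam⟩, ⟨hlam0, hlameq, hsecond⟩, ?_⟩
  rintro ⟨x1, l1⟩ ⟨h10, h1eq, h1g⟩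
  have h10' : (0:ℝ) ≤ l1 := h10
  have h1eq' : l1 • v x1 + N⁻¹ *ᵥ x1 = 0 := h1eq
  have hgx1 : g x1 = τm := by
    have : (1 / 2) * g x1 - τm / 2 = 0 := h1g
    linarith
  have hD1 := hJ x1 l1 h10' h1eq' xs
  have hD2 := hJ xs lam hlam0 hlameq x1
  rw [hgx1, hgeq] at hD1 hD2
  have hD1nn : 0 ≤ (xs - x1) ⬝ᵥ (N⁻¹ *ᵥ (xs - x1)) := hQsd _
  have hD2nn : 0 ≤ (x1 - xs) ⬝ᵥ (N⁻¹ *ᵥ (x1 - xs)) := hQsd _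
  have hsub : xs - x1 = 0 := by
    by_contra hne
    have := hQpos _ hne
    linarith
  have hxeq : x1 = xs := by
    have := sub_eq_zero.mp hsub
    exact this.symm
  have hleq : l1 = lam := by
    rw [hxeq] at h1eq'
    have e1 : l1 • v xs = -(N⁻¹ *ᵥ xs) := eq_neg_of_add_eq_zero_left h1eq'
    have e2 : lam • v xs = -(N⁻¹ *ᵥ xs) := eq_neg_of_add_eq_zero_left hlameq
    have hz : (l1 - lam) • v xs = 0 := by
      rw [sub_smul, e1, e2]; abel
    rcases smul_eq_zero.mp hz with h | h
    · linarith [sub_eq_zero.mp h]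
    · exact absurd h hvne
  rw [Prod.mk.injEq]
  exact ⟨hxeq, hleq⟩
end
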